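/- Let σ₁ > σ₂ > ⋯ > σ_m be integers of the form σ_i = μ_i − i + 1 for a partition μ, and let λ be a covariant weight with k = λ_i − μ_i ≥ 1 for a fixed index i, where i is minimal with λ_i − μ_i > 0 (so μ_j = λ_j for j < i). Then the scalar (σ_i + λ_{m+k} + m) · ∏_{j : j ≠ i, λ_j − μ_j ≥ k} (σ_i − σ_j + 1) · ∏_{j : j ≠ i, λ_j − μ_j < k} (σ_i − σ_j) is nonzero, provided μ + δ_i (obtained from μ by increasing μ_i by 1) is also of the form with μ_i + 1 ≤ λ_i; in particular σ_i − σ_{i−1} + 1 ≠ 0 under these hypotheses. -/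

import Mathlib

/-- Let `σ_j = μ_j - j + 1` (strictly decreasing since `μ` is a
partition; with 0-based indexing `σ_j = μ_j - j`).  Let `i` be minimal with
`k = λ_i - μ_i > 0`, so `λ_j = μ_j` for `j < i`, and suppose `μ + δ_i` is again
a partition (`μ_j ≥ μ_i + 1` for `j < i`).  Then the integer
`(σ_i + λ_{m+k} + m) · ∏_{j ≠ i, λ_j - μ_j ≥ k} (σ_i - σ_j + 1)
  · ∏_{j ≠ i, λ_j - μ_j < k} (σ_i - σ_j)` is nonzero; in particular
`σ_i - σ_j + 1 ≠ 0` for all `j < i`. -/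
theorem stmt_16 (m n : ℕ) (lam mu : Fin m → ℕ)
    (hlam : ∀ i j : Fin m, i ≤ j → lam j ≤ lam i)
    (hmu : ∀ i j : Fin m, i ≤ j → mu j ≤ mu i)
    (hmulam : ∀ j : Fin m, mu j ≤ lam j ∧ lam j ≤ mu j + n)
    (lamk : ℕ) (i : Fin m) (k : ℕ) (hk : k = lam i - mu i) (hk1 : 1 ≤ k)
    (hmin : ∀ j : Fin m, j < i → lam j = mu j)
    (hpart : ∀ j : Fin m, j < i → mu i + 1 ≤ mu j)
    (sig : Fin m → ℤ) (hsig : ∀ j, sig j = (mu j : ℤ) - (j : ℕ)) :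
    ((sig i + lamk + m) *
        (∏ j ∈ Finset.univ.filter (fun j : Fin m => j ≠ i ∧ k ≤ lam j - mu j),
          (sig i - sig j + 1)) *
        (∏ j ∈ Finset.univ.filter (fun j : Fin m => j ≠ i ∧ lam j - mu j < k),
          (sig i - sig j)) ≠ 0) ∧
    (∀ j : Fin m, j < i → sig i - sig j + 1 ≠ 0) := by
  have hlt : ∀ j : Fin m, j < i → sig i - sig j + 1 ≠ 0 := by
    intro j hj
    have h1 := hpart j hj
    have h2 : (j : ℕ) < (i : ℕ) := hj
    rw [hsig, hsig]
    have : (mu i : ℤ) + 1 ≤ (mu j : ℤ) := by exact_mod_cast h1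
    omega
  refine ⟨?_, hlt⟩
  have him : (i : ℕ) < m := i.isLt
  have hfirst : sig i + (lamk : ℤ) + m ≠ 0 := by
    rw [hsig]
    have : (lamk : ℤ) ≥ 0 := Int.ofNat_nonneg _
    omega
  have hgt : ∀ j : Fin m, i < j → 0 < sig i - sig j := by
    intro j hj
    have h1 := hmu i j (le_of_lt hj)
    have h2 : (i : ℕ) < (j : ℕ) := hj
    rw [hsig, hsig]
    have : (mu j : ℤ) ≤ (mu i : ℤ) := by exact_mod_cast h1
    omega
  refine mul_ne_zero (mul_ne_zero hfirst ?_) ?_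
  · rw [Finset.prod_ne_zero_iff]
    intro j hj
    simp only [Finset.mem_filter, Finset.mem_univ, true_and] at hj
    obtain ⟨hji, hjk⟩ := hj
    have hij : i < j := by
      rcases lt_trichotomy j i with h | h | h
      · exfalso
        have := hmin j h
        omega
      · exact absurd h hji
      · exact h
    have := hgt j hij
    omega
  · rw [Finset.prod_ne_zero_iff]
    intro j hj
    simp only [Finset.mem_filter, Finset.mem_univ, true_and] at hj
    obtain ⟨hji, hjk⟩ := hj
    rcases lt_trichotomy j i with h | h | h
    · have h1 := hpart j h
      have h2 : (j : ℕ) < (i : ℕ) := h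
      rw [hsig, hsig]
      have : (mu i : ℤ) + 1 ≤ (mu j : ℤ) := by exact_mod_cast h1
      omega
    · exact absurd h hji
    · have := hgt j h
      omega
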